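/- Let λ₁, λ₂, μ₁, μ₂, μ'₁, μ'₂ > 0. The 4×4 matrix A₁ with rows (λ₁+λ₂, −μ₁, 0, −μ₂), (−λ₂, 0, −μ'₁, λ₁+μ₂), (0, −λ₂, μ'₁+μ'₂, −λ₁), (1, 1, 1, 1) is invertible, so the linear system A₁ π̄ = (0,0,0,1)ᵀ has a unique solution π̄ ∈ ℝ⁴. -/

import Mathlib

theorem noma_balance_matrix_invertible (l₁ l₂ μ₁ μ₂ μ'₁ μ'₂ : ℝ)
    (hl₁ : 0 < l₁) (hl₂ : 0 < l₂) (hμ₁ : 0 < μ₁) (hμ₂ : 0 < μ₂)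
    (hμ'₁ : 0 < μ'₁) (hμ'₂ : 0 < μ'₂) :
    IsUnit (!![l₁+l₂, -μ₁, 0, -μ₂;
               -l₂, 0, -μ'₁, l₁+μ₂;
               0, -l₂, μ'₁+μ'₂, -l₁;
               1, 1, 1, 1] : Matrix (Fin 4) (Fin 4) ℝ) ∧
    ∃! π : Fin 4 → ℝ,
      (!![l₁+l₂, -μ₁, 0, -μ₂;
          -l₂, 0, -μ'₁, l₁+μ₂;
          0, -l₂, μ'₁+μ'₂, -l₁;
          1, 1, 1, 1] : Matrix (Fin 4) (Fin 4) ℝ).mulVec π = ![0, 0, 0, 1] := by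
  set A : Matrix (Fin 4) (Fin 4) ℝ :=
    !![l₁+l₂, -μ₁, 0, -μ₂;
       -l₂, 0, -μ'₁, l₁+μ₂;
       0, -l₂, μ'₁+μ'₂, -l₁;
       1, 1, 1, 1] with hA
  have hdet : A.det ≠ 0 := by
    have h : A.det = -(μ₁*μ₂*μ'₂ + μ₁*μ₂*μ'₁ + l₂*μ₂*μ'₁ + l₂*μ₁*μ'₂ + l₂*μ₁*μ'₁
        + l₂^2*μ'₁ + l₁*μ₂*μ'₂ + l₁*μ₂*μ'₁ + l₁*μ₁*μ'₂ + l₁*l₂*μ'₂ + l₁*l₂*μ'₁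
        + l₁*l₂*μ₂ + l₁*l₂*μ₁ + l₁*l₂^2 + l₁^2*μ'₂ + l₁^2*l₂) := by
      simp [hA, Matrix.det_succ_row_zero, Fin.sum_univ_succ, show Fin.succAbove (1:Fin 4) (2:Fin 3) = 3 from rfl, show Fin.succAbove (3:Fin 4) (2:Fin 3) = 2 from rfl]; ring
    rw [h]
    have : (0:ℝ) < μ₁*μ₂*μ'₂ + μ₁*μ₂*μ'₁ + l₂*μ₂*μ'₁ + l₂*μ₁*μ'₂ + l₂*μ₁*μ'₁
        + l₂^2*μ'₁ + l₁*μ₂*μ'₂ + l₁*μ₂*μ'₁ + l₁*μ₁*μ'₂ + l₁*l₂*μ'₂ + l₁*l₂*μ'₁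
        + l₁*l₂*μ₂ + l₁*l₂*μ₁ + l₁*l₂^2 + l₁^2*μ'₂ + l₁^2*l₂ := by positivity
    linarith
  have hu : IsUnit A := by
    rw [Matrix.isUnit_iff_isUnit_det]
    exact isUnit_iff_ne_zero.mpr hdet
  refine ⟨hu, ?_⟩
  have := hu.nonempty_invertible
  rcases this with ⟨inv⟩
  refine ⟨A⁻¹.mulVec ![0,0,0,1], ?_, ?_⟩
  · show A.mulVec (A⁻¹.mulVec ![0,0,0,1]) = ![0,0,0,1]
    rw [Matrix.mulVec_mulVec, Matrix.mul_nonsing_inv A (isUnit_iff_ne_zero.mpr hdet), Matrix.one_mulVec]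
  · intro y hy
    have : A⁻¹.mulVec (A.mulVec y) = A⁻¹.mulVec ![0,0,0,1] := by rw [hy]
    rwa [Matrix.mulVec_mulVec, Matrix.nonsing_inv_mul A (isUnit_iff_ne_zero.mpr hdet), Matrix.one_mulVec] at this
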